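/- For n ≥ 1 and s ≥ 0, the number of sequences (u_1, ..., u_n) of positive integers with u_n = n + s satisfying condition (1) equals C_{n−1}^(s) = ((s+1)/(2(n−1)+s+1)) * binomial(2(n−1)+s+1, n−1). -/

import Mathlib

def gc (n k : ℕ) : ℚ := ((k : ℚ) + 1) / (2 * (n : ℚ) + (k : ℚ) + 1) * ((2 * n + k + 1).choose n : ℚ)

def cat (n : ℕ) : ℚ := 1 / ((n : ℚ) + 1) * ((2 * n).choose n : ℚ)

def Cond {n : ℕ} (u : Fin n → ℕ) : Prop :=
  ∀ i j : Fin n, i < j →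
    ¬(1 ≤ (u j : ℤ) - (((j : ℕ) : ℤ) - ((i : ℕ) : ℤ)) ∧
      (u j : ℤ) - (((j : ℕ) : ℤ) - ((i : ℕ) : ℤ)) ≤ (u i : ℤ) - 1)

lemma gc_zero (k : ℕ) : gc 0 k = 1 := by
  unfold gc
  rw [Nat.choose_zero_right]
  have : (2 * (0:ℚ) + (k:ℚ) + 1) ≠ 0 := by positivity
  field_simp
  push_cast; ring

lemma gc_one (k : ℕ) : gc 1 k = (k:ℚ) + 1 := by
  unfold gc
  have h : (2 * 1 + k + 1).choose 1 = k + 3 := by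
    rw [Nat.choose_one_right]; omega
  rw [h]
  have : (2 * (1:ℚ) + (k:ℚ) + 1) ≠ 0 := by positivity
  push_cast
  field_simp
  ring

lemma gc_base (m : ℕ) : gc m 1 = gc (m+1) 0 := by
  unfold gc
  have h := Nat.add_one_mul_choose_eq (2*m+2) m
  have hd1 : (2 * (m:ℚ) + 1 + 1) ≠ 0 := by positivity
  have hd2 : (2 * ((m:ℚ)+1) + 0 + 1) ≠ 0 := by positivity
  have hc1 : (2*m+1+1 : ℕ) = 2*m+2 := by ring
  have hc2 : (2*(m+1)+0+1 : ℕ) = 2*m+3 := by ring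
  rw [hc1, hc2]
  have h' : ((2*m+3 : ℕ):ℚ) * ((2*m+2).choose m : ℚ) = (((2*m+3).choose (m+1) : ℕ):ℚ) * ((m+1 : ℕ):ℚ) := by
    exact_mod_cast congrArg (Nat.cast : ℕ → ℚ) h
  push_cast at h' ⊢
  field_simp
  linear_combination (2:ℚ) * h'

lemma gc_step (m k : ℕ) : gc (m+1) (k+1) = gc (m+1) k + gc m (k+2) := by
  unfold gc
  have hc1 : (2*(m+1)+(k+1)+1 : ℕ) = 2*m+k+4 := by ring
  have hc2 : (2*(m+1)+k+1 : ℕ) = 2*m+k+3 := by ring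
  have hc3 : (2*m+(k+2)+1 : ℕ) = 2*m+k+3 := by ring
  rw [hc1, hc2, hc3]
  have hP : ((2*m+k+4).choose (m+1) : ℚ) = ((2*m+k+3).choose m : ℚ) + ((2*m+k+3).choose (m+1) : ℚ) := by
    have : (2*m+k+4).choose (m+1) = (2*m+k+3).choose m + (2*m+k+3).choose (m+1) := by
      have := Nat.choose_succ_succ (2*m+k+3) m
      convert this using 2 <;> omega
    exact_mod_cast congrArg (Nat.cast : ℕ → ℚ) this
  have h2 : ((2*m+k+4 : ℕ):ℚ) * ((2*m+k+3).choose m : ℚ) = ((2*m+k+4).choose (m+1) : ℚ) * ((m+1:ℕ):ℚ) := by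
    exact_mod_cast congrArg (Nat.cast : ℕ → ℚ) (Nat.add_one_mul_choose_eq (2*m+k+3) m)
  have hd1 : (2 * ((m:ℚ)+1) + ((k:ℚ)+1) + 1) ≠ 0 := by positivity
  have hd2 : (2 * ((m:ℚ)+1) + (k:ℚ) + 1) ≠ 0 := by positivity
  have hd3 : (2 * (m:ℚ) + ((k:ℚ)+2) + 1) ≠ 0 := by positivity
  push_cast at h2 hP ⊢
  rw [hP] at h2 ⊢
  field_simp
  linear_combination (-2*(2*(m:ℚ)+k+3)) * h2

lemma gc_sum (m k : ℕ) : ∑ t ∈ Finset.range (k+1), gc m (t+1) = gc (m+1) k := by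
  induction k with
  | zero => simpa using gc_base m
  | succ k ih =>
    rw [Finset.sum_range_succ, ih, gc_step m k]

lemma cond_iff {n : ℕ} (u : Fin n → ℕ) :
    Cond u ↔ ∀ i j : Fin n, (i:ℕ) < (j:ℕ) →
      (u j + (i:ℕ) ≤ (j:ℕ) ∨ u i + (j:ℕ) ≤ u j + (i:ℕ)) := by
  unfold Cond
  constructor
  · intro h i j hij
    have := h i j (Fin.lt_def.mpr hij)
    omega
  · intro h i j hij
    have := h i j (Fin.lt_def.mp hij)
    omega

def T (n s : ℕ) : Set (Fin (n+1) → ℕ) :=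
  {u | (∀ i, 1 ≤ u i) ∧ u (Fin.last n) = (n+1) + s ∧ Cond u}

lemma T_bound {n s : ℕ} {u : Fin (n+1) → ℕ} (hu : u ∈ T n s) (i : Fin (n+1)) :
    u i ≤ n + 1 + s := by
  obtain ⟨hpos, hlast, hcond⟩ := hu
  rcases eq_or_lt_of_le (Nat.lt_succ_iff.mp i.isLt) with h | h
  · have : i = Fin.last n := Fin.ext h
    rw [this, hlast]
  · have := (cond_iff u).mp hcond i (Fin.last n) (by simpa using h)
    rw [hlast] at this
    simp only [Fin.val_last] at this
    omega

lemma T_finite (n s : ℕ) : (T n s).Finite := by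
  apply Set.Finite.subset (Set.Finite.pi (fun _ : Fin (n+1) => Set.finite_Iic (n+1+s)))
  intro u hu
  simp only [Set.mem_pi, Set.mem_univ, Set.mem_Iic, forall_true_left]
  exact fun i => T_bound hu i

lemma T_u0 {m s : ℕ} {u : Fin (m+2) → ℕ} (hu : u ∈ T (m+1) s) :
    1 ≤ u 0 ∧ u 0 ≤ s + 1 := by
  obtain ⟨hpos, hlast, hcond⟩ := hu
  refine ⟨hpos 0, ?_⟩
  have := (cond_iff u).mp hcond 0 (Fin.last (m+1)) (by simp)
  rw [hlast] at this
  simp only [Fin.val_last, Fin.val_zero] at this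
  omega

/-- Gap lemma: in a sequence in `T (m+1) (a+t)` with `u 0 = a+1`, every later
value is either ≤ its index or ≥ index + 1 + a. -/
lemma T_gap {m s a : ℕ} {u : Fin (m+2) → ℕ} (hu : u ∈ T (m+1) s) (h0 : u 0 = a + 1)
    (i : Fin (m+2)) (hi : (i:ℕ) ≠ 0) : u i ≤ (i:ℕ) ∨ (i:ℕ) + 1 + a ≤ u i := by
  obtain ⟨hpos, hlast, hcond⟩ := hu
  have := (cond_iff u).mp hcond 0 i (by simp only [Fin.val_zero]; omega)
  rw [h0] at this
  simp only [Fin.val_zero] at this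
  omega

lemma piece_card (m a t : ℕ) :
    {u | u ∈ T (m+1) (a+t) ∧ u 0 = a+1}.ncard = (T m (t+1)).ncard := by
  classical
  set P : Set (Fin (m+2) → ℕ) := {u | u ∈ T (m+1) (a+t) ∧ u 0 = a+1} with hP
  set F : (Fin (m+2) → ℕ) → (Fin (m+1) → ℕ) :=
    fun u j => if u j.succ ≤ (j:ℕ)+1 then u j.succ else u j.succ - a with hF
  -- key classification of values
  have key : ∀ u ∈ P, ∀ j : Fin (m+1),
      (u j.succ ≤ (j:ℕ)+1 ∧ F u j = u j.succ) ∨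
      ((j:ℕ)+2+a ≤ u j.succ ∧ F u j = u j.succ - a ∧ (j:ℕ)+2 ≤ F u j) := by
    intro u hu j
    have hg := T_gap hu.1 hu.2 j.succ (by simp)
    simp only [Fin.val_succ] at hg
    rcases hg with h | h
    · left
      refine ⟨h, ?_⟩
      simp only [hF, if_pos (by omega : u j.succ ≤ (j:ℕ)+1)]
    · right
      refine ⟨by omega, ?_, ?_⟩ <;>
        simp only [hF, if_neg (by omega : ¬ u j.succ ≤ (j:ℕ)+1)] <;> omega
  have himg : F '' P = T m (t+1) := by
    apply Set.Subset.antisymm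
    · rintro w ⟨u, hu, rfl⟩
      obtain ⟨⟨hpos, hlast, hcond⟩, h0⟩ := hu
      have hc := (cond_iff u).mp hcond
      refine ⟨?_, ?_, ?_⟩
      · intro j
        rcases key u ⟨⟨hpos, hlast, hcond⟩, h0⟩ j with ⟨l, e⟩ | ⟨g, e, f⟩
        · rw [e]; exact hpos _
        · omega
      · have hls : (Fin.last m).succ = Fin.last (m+1) := rfl
        rcases key u ⟨⟨hpos, hlast, hcond⟩, h0⟩ (Fin.last m) with ⟨l, e⟩ | ⟨g, e, f⟩ <;>
          rw [hls, hlast] at * <;> simp only [Fin.val_last] at * <;> omega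
      · rw [cond_iff]
        intro i j hij
        have hp := hc i.succ j.succ (by simpa using hij)
        simp only [Fin.val_succ] at hp
        rcases key u ⟨⟨hpos, hlast, hcond⟩, h0⟩ i with ⟨l1, e1⟩ | ⟨g1, e1, f1⟩ <;>
          rcases key u ⟨⟨hpos, hlast, hcond⟩, h0⟩ j with ⟨l2, e2⟩ | ⟨g2, e2, f2⟩ <;> omega
    · intro w hw
      obtain ⟨hwpos, hwlast, hwcond⟩ := hw
      have hwc := (cond_iff w).mp hwcond
      set u : Fin (m+2) → ℕ :=
        Fin.cases (a+1) (fun j => if w j ≤ (j:ℕ)+1 then w j else w j + a) with hu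
      have hu0 : u 0 = a + 1 := by simp [hu]
      have husucc : ∀ j : Fin (m+1), u j.succ = if w j ≤ (j:ℕ)+1 then w j else w j + a := by
        intro j; simp [hu]
      have huT : u ∈ T (m+1) (a+t) := by
        refine ⟨?_, ?_, ?_⟩
        · intro i
          rcases Fin.eq_zero_or_eq_succ i with rfl | ⟨j, rfl⟩
          · omega
          · rw [husucc j]
            have := hwpos j
            split <;> omega
        · have hls : (Fin.last (m+1)) = (Fin.last m).succ := rfl
          rw [hls, husucc, hwlast]
          simp only [Fin.val_last]
          rw [if_neg (by omega)]
          omega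
        · rw [cond_iff]
          intro i j hij
          rcases Fin.eq_zero_or_eq_succ j with rfl | ⟨j', rfl⟩
          · simp only [Fin.val_zero] at hij; omega
          · rcases Fin.eq_zero_or_eq_succ i with rfl | ⟨i', rfl⟩
            · rw [hu0, husucc j']
              simp only [Fin.val_zero, Fin.val_succ]
              split <;> omega
            · rw [husucc i', husucc j']
              simp only [Fin.val_succ] at hij ⊢
              have hp := hwc i' j' (by omega)
              split <;> split <;> omega
      refine ⟨u, ⟨huT, hu0⟩, ?_⟩
      funext j
      simp only [hF, husucc j]
      rcases le_or_gt (w j) ((j:ℕ)+1) with hwj | hwj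
      · simp only [if_pos hwj]
      · rw [if_neg (show ¬ w j ≤ (j:ℕ)+1 by omega), if_neg (by omega)]
        omega
  have hinj : Set.InjOn F P := by
    intro u₁ h₁ u₂ h₂ he
    funext i
    rcases Fin.eq_zero_or_eq_succ i with rfl | ⟨j, rfl⟩
    · rw [h₁.2, h₂.2]
    · have e : F u₁ j = F u₂ j := congrFun he j
      rcases key u₁ h₁ j with ⟨l1, e1⟩ | ⟨g1, e1, f1⟩ <;>
        rcases key u₂ h₂ j with ⟨l2, e2⟩ | ⟨g2, e2, f2⟩ <;> omega
  rw [← himg, Set.ncard_image_of_injOn hinj]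

lemma ncard_fiberwise {α : Type*} (S : Set α) (hfin : S.Finite) (g : α → ℕ) (k : ℕ)
    (hg : ∀ x ∈ S, g x < k) :
    S.ncard = ∑ b ∈ Finset.range k, {x | x ∈ S ∧ g x = b}.ncard := by
  classical
  rw [Set.ncard_eq_toFinset_card S hfin]
  rw [Finset.card_eq_sum_card_fiberwise
    (f := g) (t := Finset.range k)
    (fun x hx => Finset.mem_range.mpr (hg x (hfin.mem_toFinset.mp hx)))]
  apply Finset.sum_congr rfl
  intro b _
  rw [← Set.ncard_coe_finset]
  congr 1
  ext x
  simp [hfin.mem_toFinset]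

lemma T_zero (s : ℕ) : T 0 s = {fun _ => 1 + s} := by
  ext u
  constructor
  · rintro ⟨hp, hl, hc⟩
    funext i
    have : i = Fin.last 0 := Fin.ext (by have := i.isLt; omega)
    rw [this, hl]
  · rintro rfl
    refine ⟨fun i => by show 1 ≤ 1 + s; omega, by norm_num, ?_⟩
    intro i j hij
    have : (i:ℕ) < (j:ℕ) := Fin.lt_def.mp hij
    have hi := i.isLt
    have hj := j.isLt
    omega

lemma T_card (m s : ℕ) : ((T m s).ncard : ℚ) = gc m s := by
  induction m generalizing s with
  | zero => rw [T_zero, Set.ncard_singleton, gc_zero]; norm_num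
  | succ m ih =>
    have hb : ∀ u ∈ T (m+1) s, u 0 - 1 < s + 1 := fun u hu => by
      have := T_u0 hu; omega
    rw [ncard_fiberwise (T (m+1) s) (T_finite _ _) (fun u => u 0 - 1) (s+1) hb]
    push_cast
    have hterm : ∀ b ∈ Finset.range (s+1),
        ({u | u ∈ T (m+1) s ∧ u 0 - 1 = b}.ncard : ℚ) = gc m (s - b + 1) := by
      intro b hb'
      have hble : b ≤ s := by simpa [Nat.lt_succ_iff] using hb'
      have hset : {u | u ∈ T (m+1) s ∧ u 0 - 1 = b} = {u | u ∈ T (m+1) (b + (s-b)) ∧ u 0 = b+1} := by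
        have : b + (s - b) = s := by omega
        rw [this]
        ext u
        constructor
        · rintro ⟨hu, h0⟩
          exact ⟨hu, by have := (T_u0 hu).1; omega⟩
        · rintro ⟨hu, h0⟩
          exact ⟨hu, by omega⟩
      rw [hset, piece_card m b (s-b), ih (s-b+1)]
    rw [Finset.sum_congr rfl hterm]
    have hrefl := Finset.sum_range_reflect (fun j => gc m (j+1)) (s+1)
    simp only [Nat.add_sub_cancel] at hrefl
    rw [hrefl]
    exact gc_sum m s

theorem stmt8 (n s : ℕ) (hn : 1 ≤ n) :
    ({u : Fin n → ℕ | (∀ i, 1 ≤ u i) ∧ u ⟨n - 1, by omega⟩ = n + s ∧ Cond u}.ncard : ℚ)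
      = gc (n - 1) s := by
  obtain ⟨m, rfl⟩ : ∃ m, n = m + 1 := ⟨n - 1, by omega⟩
  exact T_card m s
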